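/- There is a bijection between the set of saturated covers on the grid [m] × [n] and the set of pairs of compatible codes on [m] × [n], given by assigning to a saturated cover S its horizontal code a = (a_1,...,a_m) and vertical code b = (b_1,...,b_n), where a_i is the number of horizontal edges of S in column i and b_j is the number of vertical edges of S in row j. -/

import Mathlib

/-- A saturated cover on the grid `[m] × [n] = {0,…,m} × {0,…,n}`.
`H i j = true` means the horizontal edge `(i,j) → (i+1,j)` is present (valid for `i < m`, `j ≤ n`);
`V i j = true` means the vertical edge `(i,j) → (i,j+1)` is present (valid for `i ≤ m`, `j < n`). -/
structure SatCover (m n : ℕ) where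
  H : ℕ → ℕ → Bool
  V : ℕ → ℕ → Bool
  H_bound : ∀ i j, H i j = true → i < m ∧ j ≤ n
  V_bound : ∀ i j, V i j = true → i ≤ m ∧ j < n
  H_down : ∀ i j k, k < j → H i j = true → H i k = true
  V_left : ∀ i j k, k < i → V i j = true → V k j = true
  sq₁ : ∀ i j, H i j = true → H i (j+1) = true → V i j = true → V (i+1) j = true
  sq₂ : ∀ i j, H i j = true → H i (j+1) = true → V (i+1) j = true → V i j = true
  sq₃ : ∀ i j, H i j = true → V i j = true → V (i+1) j = true → H i (j+1) = true
  sq₄ : ∀ i j, H i (j+1) = true → V i j = true → V (i+1) j = true → H i j = true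

/-- `satCount m n` is the number of saturated covers on `[m] × [n]`. -/
noncomputable def satCount (m n : ℕ) : ℕ := Nat.card (SatCover m n)

/-- The horizontal code: `hcode m n S i` is the number of horizontal edges of `S` in column `i`
(for `1 ≤ i ≤ m`). -/
def hcode (m n : ℕ) (S : SatCover m n) (i : ℕ) : ℕ :=
  ((Finset.range (n + 1)).filter (fun j => S.H (i - 1) j = true)).card

/-- The vertical code: `vcode m n S j` is the number of vertical edges of `S` in row `j`
(for `1 ≤ j ≤ n`). -/
def vcode (m n : ℕ) (S : SatCover m n) (j : ℕ) : ℕ :=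
  ((Finset.range (m + 1)).filter (fun k => S.V k (j - 1) = true)).card

/-- A pair of compatible codes on `[m] × [n]`: tuples `(a_1,…,a_m)`, `(b_1,…,b_n)` with
`0 ≤ a_i ≤ n+1`, `0 ≤ b_j ≤ m+1`, `b_{a_i} ≤ i` and `a_{b_j} ≤ j` whenever defined
(functions are normalized to be `0` outside the index range). -/
structure CompCodes (m n : ℕ) where
  a : ℕ → ℕ
  b : ℕ → ℕ
  a_supp : ∀ i, (i = 0 ∨ m < i) → a i = 0
  b_supp : ∀ j, (j = 0 ∨ n < j) → b j = 0
  a_le : ∀ i, 1 ≤ i → i ≤ m → a i ≤ n + 1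
  b_le : ∀ j, 1 ≤ j → j ≤ n → b j ≤ m + 1
  compat_a : ∀ i, 1 ≤ i → i ≤ m → 1 ≤ a i → a i ≤ n → b (a i) ≤ i
  compat_b : ∀ j, 1 ≤ j → j ≤ n → 1 ≤ b j → b j ≤ m → a (b j) ≤ j

-- auxiliary lemmas

lemma SatCover.ext' {m n : ℕ} {S T : SatCover m n} (hH : S.H = T.H) (hV : S.V = T.V) :
    S = T := by
  cases S; cases T; simp_all

lemma CompCodes.ext' {m n : ℕ} {C D : CompCodes m n} (ha : C.a = D.a) (hb : C.b = D.b) :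
    C = D := by
  cases C; cases D; simp_all

lemma downclosed_iff {N : ℕ} (p : ℕ → Bool)
    (hb : ∀ j, p j = true → j ≤ N)
    (hd : ∀ j k, k < j → p j = true → p k = true) (j : ℕ) :
    p j = true ↔ j < ((Finset.range (N+1)).filter (fun j => p j = true)).card := by
  set T := (Finset.range (N+1)).filter (fun j => p j = true) with hT
  have hcle : T.card ≤ N + 1 := le_trans (Finset.card_filter_le _ _) (by simp)
  have hsub : Finset.range T.card ⊆ T := by
    intro j hj
    simp only [Finset.mem_range] at hj
    by_contra hjT
    have hpj : ¬ p j = true := by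
      intro h
      exact hjT (by simp [hT, Finset.mem_filter, Nat.lt_succ_iff.mpr (hb j h), h])
    have hsub2 : T ⊆ Finset.range j := by
      intro x hx
      simp only [hT, Finset.mem_filter] at hx
      simp only [Finset.mem_range]
      rcases lt_or_ge x j with h | h
      · exact h
      · rcases eq_or_lt_of_le h with rfl | h'
        · exact absurd hx.2 hpj
        · exact absurd (hd x j h' hx.2) hpj
    have := Finset.card_le_card hsub2
    simp only [Finset.card_range] at this
    omega
  have hTeq : Finset.range T.card = T :=
    Finset.eq_of_subset_of_card_le hsub (by simp)
  constructor
  · intro h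
    have hjN := hb j h
    have hmem : j ∈ T := by simp [hT, Finset.mem_filter, Nat.lt_succ_iff.mpr hjN, h]
    rw [← hTeq] at hmem
    simpa using hmem
  · intro h
    have hmem : j ∈ T := hTeq ▸ Finset.mem_range.mpr h
    simp only [hT, Finset.mem_filter] at hmem
    exact hmem.2

lemma hcode_iff {m n : ℕ} (S : SatCover m n) (i j : ℕ) :
    S.H (i-1) j = true ↔ j < hcode m n S i :=
  downclosed_iff (fun j => S.H (i-1) j) (fun j h => (S.H_bound _ _ h).2)
    (fun j k hk h => S.H_down _ _ _ hk h) j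

lemma vcode_iff {m n : ℕ} (S : SatCover m n) (j k : ℕ) :
    S.V k (j-1) = true ↔ k < vcode m n S j :=
  downclosed_iff (fun k => S.V k (j-1)) (fun k h => (S.V_bound _ _ h).1)
    (fun k l hl h => S.V_left _ _ _ hl h) k

lemma hcode_le {m n : ℕ} (S : SatCover m n) (i : ℕ) : hcode m n S i ≤ n + 1 :=
  le_trans (Finset.card_filter_le _ _) (by simp)

lemma vcode_le {m n : ℕ} (S : SatCover m n) (j : ℕ) : vcode m n S j ≤ m + 1 :=
  le_trans (Finset.card_filter_le _ _) (by simp)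

def toCodes (m n : ℕ) (S : SatCover m n) : CompCodes m n where
  a := fun i => if 1 ≤ i ∧ i ≤ m then hcode m n S i else 0
  b := fun j => if 1 ≤ j ∧ j ≤ n then vcode m n S j else 0
  a_supp := fun i hi => by rw [if_neg (by omega)]
  b_supp := fun j hj => by rw [if_neg (by omega)]
  a_le := fun i h1 h2 => by rw [if_pos ⟨h1, h2⟩]; exact hcode_le S i
  b_le := fun j h1 h2 => by rw [if_pos ⟨h1, h2⟩]; exact vcode_le S j
  compat_a := by
    intro i hi1 hi2 ha1 ha2
    rw [if_pos ⟨hi1, hi2⟩] at ha1 ha2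
    simp only [if_pos (show 1 ≤ i ∧ i ≤ m from ⟨hi1, hi2⟩)]
    set c := hcode m n S i with hc
    rw [if_pos ⟨ha1, ha2⟩]
    by_contra hlt
    push_neg at hlt
    have hV : S.V i (c - 1) = true := (vcode_iff S c i).mpr hlt
    have hV' : S.V (i-1) (c-1) = true := S.V_left i (c-1) (i-1) (by omega) hV
    have hH : S.H (i-1) (c-1) = true := (hcode_iff S i (c-1)).mpr (by omega)
    have hV'' : S.V ((i-1)+1) (c-1) = true := by
      rw [show i - 1 + 1 = i by omega]; exact hV
    have := S.sq₃ (i-1) (c-1) hH hV' hV''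
    rw [show c - 1 + 1 = c by omega] at this
    exact absurd ((hcode_iff S i c).mp this) (by omega)
  compat_b := by
    intro j hj1 hj2 hb1 hb2
    rw [if_pos ⟨hj1, hj2⟩] at hb1 hb2
    simp only [if_pos (show 1 ≤ j ∧ j ≤ n from ⟨hj1, hj2⟩)]
    set d := vcode m n S j with hd
    rw [if_pos ⟨hb1, hb2⟩]
    by_contra hlt
    push_neg at hlt
    have hH : S.H (d-1) j = true := (hcode_iff S d j).mpr hlt
    have hH' : S.H (d-1) (j-1) = true := S.H_down (d-1) j (j-1) (by omega) hH
    have hH'' : S.H (d-1) ((j-1)+1) = true := by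
      rw [show j - 1 + 1 = j by omega]; exact hH
    have hV : S.V (d-1) (j-1) = true := (vcode_iff S j (d-1)).mpr (by omega)
    have := S.sq₁ (d-1) (j-1) hH' hH'' hV
    rw [show d - 1 + 1 = d by omega] at this
    exact absurd ((vcode_iff S j d).mp this) (by omega)

def ofCodes (m n : ℕ) (C : CompCodes m n) : SatCover m n where
  H := fun i j => decide (j < C.a (i+1))
  V := fun i j => decide (i < C.b (j+1))
  H_bound := by
    intro i j h
    simp only [decide_eq_true_eq] at h
    have him : i < m := by
      by_contra hm
      rw [C.a_supp (i+1) (Or.inr (by omega))] at h; omega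
    have := C.a_le (i+1) (by omega) (by omega)
    exact ⟨him, by omega⟩
  V_bound := by
    intro i j h
    simp only [decide_eq_true_eq] at h
    have hjn : j < n := by
      by_contra hm
      rw [C.b_supp (j+1) (Or.inr (by omega))] at h; omega
    have := C.b_le (j+1) (by omega) (by omega)
    exact ⟨by omega, hjn⟩
  H_down := by
    intro i j k hk h
    simp only [decide_eq_true_eq] at h ⊢; omega
  V_left := by
    intro i j k hk h
    simp only [decide_eq_true_eq] at h ⊢; omega
  sq₁ := by
    intro i j h1 h2 h3
    simp only [decide_eq_true_eq] at h1 h2 h3 ⊢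
    have him : i < m := by
      by_contra hm
      rw [C.a_supp (i+1) (Or.inr (by omega))] at h1; omega
    have hjn : j < n := by
      by_contra hm
      rw [C.b_supp (j+1) (Or.inr (by omega))] at h3; omega
    by_contra hc
    have hbe : C.b (j+1) = i + 1 := by omega
    have := C.compat_b (j+1) (by omega) (by omega) (by omega) (by omega)
    rw [hbe] at this
    omega
  sq₂ := by
    intro i j h1 h2 h3
    simp only [decide_eq_true_eq] at h3 ⊢; omega
  sq₃ := by
    intro i j h1 h2 h3
    simp only [decide_eq_true_eq] at h1 h2 h3 ⊢
    have him : i < m := by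
      by_contra hm
      rw [C.a_supp (i+1) (Or.inr (by omega))] at h1; omega
    have hjn : j < n := by
      by_contra hm
      rw [C.b_supp (j+1) (Or.inr (by omega))] at h2; omega
    by_contra hc
    have hae : C.a (i+1) = j + 1 := by omega
    have := C.compat_a (i+1) (by omega) (by omega) (by omega) (by omega)
    rw [hae] at this
    omega
  sq₄ := by
    intro i j h1 h2 h3
    simp only [decide_eq_true_eq] at h1 ⊢; omega

lemma left_inv' (m n : ℕ) (S : SatCover m n) : ofCodes m n (toCodes m n S) = S := by
  apply SatCover.ext'
  · funext i j
    show decide (j < (toCodes m n S).a (i+1)) = S.H i j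
    by_cases him : i < m
    · have ha : (toCodes m n S).a (i+1) = hcode m n S (i+1) := by
        show (if _ then _ else _) = _
        rw [if_pos ⟨by omega, by omega⟩]
      rw [ha]
      have hiff := hcode_iff S (i+1) j
      rw [show i + 1 - 1 = i by omega] at hiff
      rw [show S.H i j = decide (S.H i j = true) by simp, decide_eq_decide]
      exact hiff.symm
    · have ha : (toCodes m n S).a (i+1) = 0 := by
        show (if _ then _ else _) = _
        rw [if_neg (by omega)]
      rw [ha]
      have : S.H i j = false := by
        by_contra h
        simp only [Bool.not_eq_false] at h
        exact him (S.H_bound i j h).1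
      rw [this]
      simp
  · funext i j
    show decide (i < (toCodes m n S).b (j+1)) = S.V i j
    by_cases hjn : j < n
    · have hb : (toCodes m n S).b (j+1) = vcode m n S (j+1) := by
        show (if _ then _ else _) = _
        rw [if_pos ⟨by omega, by omega⟩]
      rw [hb]
      have hiff := vcode_iff S (j+1) i
      rw [show j + 1 - 1 = j by omega] at hiff
      rw [show S.V i j = decide (S.V i j = true) by simp, decide_eq_decide]
      exact hiff.symm
    · have hb : (toCodes m n S).b (j+1) = 0 := by
        show (if _ then _ else _) = _
        rw [if_neg (by omega)]
      rw [hb]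
      have : S.V i j = false := by
        by_contra h
        simp only [Bool.not_eq_false] at h
        exact hjn (S.V_bound i j h).2
      rw [this]
      simp

lemma right_inv' (m n : ℕ) (C : CompCodes m n) : toCodes m n (ofCodes m n C) = C := by
  apply CompCodes.ext'
  · funext i
    show (if 1 ≤ i ∧ i ≤ m then hcode m n (ofCodes m n C) i else 0) = C.a i
    by_cases hi : 1 ≤ i ∧ i ≤ m
    · rw [if_pos hi]
      have hle : C.a i ≤ n + 1 := C.a_le i hi.1 hi.2
      have hii : i - 1 + 1 = i := by omega
      unfold hcode
      have hset : ((Finset.range (n+1)).filter (fun j => (ofCodes m n C).H (i-1) j = true))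
          = Finset.range (C.a i) := by
        ext x
        simp only [Finset.mem_filter, Finset.mem_range, ofCodes, decide_eq_true_eq, hii]
        omega
      rw [hset, Finset.card_range]
    · rw [if_neg hi]
      exact (C.a_supp i (by omega)).symm
  · funext j
    show (if 1 ≤ j ∧ j ≤ n then vcode m n (ofCodes m n C) j else 0) = C.b j
    by_cases hj : 1 ≤ j ∧ j ≤ n
    · rw [if_pos hj]
      have hle : C.b j ≤ m + 1 := C.b_le j hj.1 hj.2
      have hjj : j - 1 + 1 = j := by omega
      unfold vcode
      have hset : ((Finset.range (m+1)).filter (fun k => (ofCodes m n C).V k (j-1) = true))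
          = Finset.range (C.b j) := by
        ext x
        simp only [Finset.mem_filter, Finset.mem_range, ofCodes, decide_eq_true_eq, hjj]
        omega
      rw [hset, Finset.card_range]
    · rw [if_neg hj]
      exact (C.b_supp j (by omega)).symm

theorem stmt_6 (m n : ℕ) :
    ∃ e : SatCover m n ≃ CompCodes m n,
      ∀ S : SatCover m n,
        (∀ i, 1 ≤ i → i ≤ m → (e S).a i = hcode m n S i) ∧
        (∀ j, 1 ≤ j → j ≤ n → (e S).b j = vcode m n S j) := by
  refine ⟨⟨toCodes m n, ofCodes m n, left_inv' m n, right_inv' m n⟩, fun S => ⟨?_, ?_⟩⟩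
  · intro i h1 h2
    show (if _ then _ else _) = _
    rw [if_pos ⟨h1, h2⟩]
  · intro j h1 h2
    show (if _ then _ else _) = _
    rw [if_pos ⟨h1, h2⟩]
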